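/- Let f, g ∈ ℂ[x,y], let D be the derivation of ℂ[x,y] with D(x) = f and D(y) = g, and let σ be a ℂ-algebra automorphism of ℂ[x,y]. Set P = σ(x), Q = σ(y), and let J = (∂P/∂x)(∂Q/∂y) − (∂P/∂y)(∂Q/∂x) be the Jacobian determinant. Then σ commutes with D (i.e., σ(D(a)) = D(σ(a)) for all a ∈ ℂ[x,y]) if and only if the two polynomial identities σ(g)·(∂P/∂x) − σ(f)·(∂Q/∂x) = J·g and σ(g)·(∂P/∂y) − σ(f)·(∂Q/∂y) = −J·f hold. -/

import Mathlib

open MvPolynomial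

/-- The polynomial ring `ℂ[x,y]`. -/
abbrev Rxy : Type := MvPolynomial (Fin 2) ℂ

/-- Any derivation of `ℂ[x,y]` is determined by its values on `x` and `y`. -/
lemma deriv_apply (E : Derivation ℂ Rxy Rxy) (a : Rxy) :
    E a = E (X 0) * pderiv 0 a + E (X 1) * pderiv 1 a := by
  have h : E = E (X 0) • (pderiv 0 : Derivation ℂ Rxy Rxy)
      + E (X 1) • (pderiv 1 : Derivation ℂ Rxy Rxy) := by
    apply MvPolynomial.derivation_ext
    intro i
    fin_cases i <;>
      simp [pderiv_X_self, pderiv_X_of_ne, smul_eq_mul]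
  calc E a = (E (X 0) • (pderiv 0 : Derivation ℂ Rxy Rxy)
      + E (X 1) • (pderiv 1 : Derivation ℂ Rxy Rxy)) a := by rw [← h]
    _ = E (X 0) * pderiv 0 a + E (X 1) * pderiv 1 a := by
        simp [smul_eq_mul]

/-- The twist of a derivation by an automorphism. -/
noncomputable def twist (σ : Rxy ≃ₐ[ℂ] Rxy) (E : Derivation ℂ Rxy Rxy) : Derivation ℂ Rxy Rxy where
  toLinearMap := σ.symm.toLinearMap.comp (E.toLinearMap.comp σ.toLinearMap)
  map_one_eq_zero' := by simp
  leibniz' a b := by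
    simp only [LinearMap.comp_apply, AlgEquiv.toLinearMap_apply, Derivation.coeFn_coe,
      smul_eq_mul]
    rw [map_mul, E.leibniz]
    simp [smul_eq_mul, map_add, map_mul, mul_comm]

lemma twist_apply (σ : Rxy ≃ₐ[ℂ] Rxy) (E : Derivation ℂ Rxy Rxy) (a : Rxy) :
    twist σ E a = σ.symm (E (σ a)) := rfl

/-- Chain rule. -/
lemma chain_rule (σ : Rxy ≃ₐ[ℂ] Rxy) (j : Fin 2) (a : Rxy) :
    pderiv j (σ a) = pderiv j (σ (X 0)) * σ (pderiv 0 a)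
      + pderiv j (σ (X 1)) * σ (pderiv 1 a) := by
  have h := deriv_apply (twist σ (pderiv j)) a
  simp only [twist_apply] at h
  have h2 : pderiv j (σ a)
      = σ (σ.symm (pderiv j (σ (X 0))) * pderiv 0 a
        + σ.symm (pderiv j (σ (X 1))) * pderiv 1 a) := by
    rw [← h]; simp
  rw [h2]
  simp [map_add, map_mul]

theorem commutes_iff_pullback_form (f g : Rxy) (D : Derivation ℂ Rxy Rxy)
    (hDx : D (X 0) = f) (hDy : D (X 1) = g)
    (σ : Rxy ≃ₐ[ℂ] Rxy) (P Q J : Rxy)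
    (hP : P = σ (X 0)) (hQ : Q = σ (X 1))
    (hJ : J = pderiv 0 P * pderiv 1 Q - pderiv 1 P * pderiv 0 Q) :
    (∀ a : Rxy, σ (D a) = D (σ a)) ↔
      (σ g * pderiv 0 P - σ f * pderiv 0 Q = J * g ∧
        σ g * pderiv 1 P - σ f * pderiv 1 Q = -J * f) := by
  have hDa : ∀ a : Rxy, D a = f * pderiv 0 a + g * pderiv 1 a := by
    intro a; rw [deriv_apply D a, hDx, hDy]
  have hcr : ∀ (j : Fin 2) (a : Rxy),
      pderiv j (σ a) = pderiv j P * σ (pderiv 0 a) + pderiv j Q * σ (pderiv 1 a) := by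
    intro j a; rw [hP, hQ]; exact chain_rule σ j a
  constructor
  · intro h
    have hf : σ f = f * pderiv 0 P + g * pderiv 1 P := by
      have := h (X 0)
      rw [hDx, ← hP, hDa P] at this
      exact this
    have hg : σ g = f * pderiv 0 Q + g * pderiv 1 Q := by
      have := h (X 1)
      rw [hDy, ← hQ, hDa Q] at this
      exact this
    constructor <;> (rw [hf, hg, hJ]; ring)
  · rintro ⟨e1, e2⟩
    -- J is nonzero
    set A0 := σ (pderiv 0 (σ.symm (X 0)))
    set A1 := σ (pderiv 1 (σ.symm (X 0)))
    set B0 := σ (pderiv 0 (σ.symm (X 1)))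
    set B1 := σ (pderiv 1 (σ.symm (X 1)))
    have e00 : (1 : Rxy) = pderiv 0 P * A0 + pderiv 0 Q * A1 := by
      have := hcr 0 (σ.symm (X 0)); simpa using this
    have e10 : (0 : Rxy) = pderiv 1 P * A0 + pderiv 1 Q * A1 := by
      have := hcr 1 (σ.symm (X 0)); simpa using this
    have e01 : (0 : Rxy) = pderiv 0 P * B0 + pderiv 0 Q * B1 := by
      have := hcr 0 (σ.symm (X 1)); simpa using this
    have e11 : (1 : Rxy) = pderiv 1 P * B0 + pderiv 1 Q * B1 := by
      have := hcr 1 (σ.symm (X 1)); simpa using this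
    have hJ1 : J * (A0 * B1 - A1 * B0) = 1 := by
      rw [hJ]
      linear_combination (-1 : Rxy) * e00
        - (pderiv 0 P * A0 + pderiv 0 Q * A1) * e11
        + (pderiv 1 P * A0 + pderiv 1 Q * A1) * e01
    have hJne : J ≠ 0 := by
      intro h0
      rw [h0, zero_mul] at hJ1
      exact one_ne_zero hJ1.symm
    have hf : σ f = f * pderiv 0 P + g * pderiv 1 P := by
      apply mul_left_cancel₀ hJne
      linear_combination pderiv 1 P * e1 - pderiv 0 P * e2 + σ f * hJ
    have hg : σ g = f * pderiv 0 Q + g * pderiv 1 Q := by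
      apply mul_left_cancel₀ hJne
      linear_combination pderiv 1 Q * e1 - pderiv 0 Q * e2 + σ g * hJ
    intro a
    rw [hDa a, hDa (σ a), map_add, map_mul, map_mul, hcr 0 a, hcr 1 a, hf, hg]
    ring
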